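/- Let n ≥ 1, p ∈ [0,1], and let 𝒞 be a finite nonempty set of n×n binary matrices such that: (a) for all n×n permutation matrices P and Q, the set {P·C·Q : C ∈ 𝒞} equals 𝒞, and (b) for all C, D ∈ 𝒞 there exist permutation matrices T_1, T_2 with C = T_1·D·T_2. For a binary matrix M, let σ(M) be its number of 1-entries and w(M) = p^{σ(M)}·(1−p)^{n²−σ(M)}. Then for all C, D ∈ 𝒞, the sum over all n×n binary matrices M with M ≥ C (entrywise) of w(M)/|{C' ∈ 𝒞 : M ≥ C'}| equals the sum over all n×n binary matrices M with M ≥ D of w(M)/|{C' ∈ 𝒞 : M ≥ C'}|. -/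

import Mathlib

open Matrix Finset

/-- The permutation matrix (over `ℕ`) of a permutation `σ`. -/
def permMatN {n : ℕ} (σ : Equiv.Perm (Fin n)) : Matrix (Fin n) (Fin n) ℕ :=
  Matrix.of fun i j => if σ i = j then 1 else 0

/-- The 0/1 matrix (over `ℕ`) associated to a Boolean matrix of entries. -/
def toMat {n : ℕ} (b : Fin n → Fin n → Bool) : Matrix (Fin n) (Fin n) ℕ :=
  Matrix.of fun i j => if b i j then 1 else 0

lemma permMat_mul_mul_apply {n : ℕ} (P Q : Equiv.Perm (Fin n))
    (C : Matrix (Fin n) (Fin n) ℕ) (i j : Fin n) :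
    (permMatN P * C * permMatN Q) i j = C (P i) (Q⁻¹ j) := by
  have h1 : ∀ k, (permMatN P * C) i k = C (P i) k := by
    intro k
    simp [permMatN, Matrix.mul_apply, ite_mul]
  rw [Matrix.mul_apply]
  simp only [h1]
  simp only [permMatN, Matrix.of_apply, mul_ite, mul_one, mul_zero,
    Equiv.apply_eq_iff_eq_symm_apply]
  simp [Finset.sum_ite_eq']

/-- The self-equivalence of Boolean matrices induced by a pair of permutations. -/
def shiftE {n : ℕ} (T₁ T₂ : Equiv.Perm (Fin n)) :
    (Fin n → Fin n → Bool) ≃ (Fin n → Fin n → Bool) where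
  toFun b i j := b (T₁⁻¹ i) (T₂ j)
  invFun b i j := b (T₁ i) (T₂⁻¹ j)
  left_inv b := by funext i j; simp
  right_inv b := by funext i j; simp

open Classical in
/-- Let `𝒞` be a finite nonempty set of `n × n` binary matrices, closed under two-sided
multiplication by permutation matrices, and such that any two elements of `𝒞` differ by
two-sided multiplication by permutation matrices.  For each binary matrix `M` (encoded by
its Boolean matrix of entries `b`) give it the Bernoulli weight
`∏_{i,j} (p if b i j else 1-p)` (which equals `p^{σ(M)}·(1-p)^{n²-σ(M)}`).  Then the sum,
over binary matrices `M` dominating `C`, of `weight(M) / #{C' ∈ 𝒞 : M ≥ C'}` does not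
depend on the choice of `C ∈ 𝒞`. -/
theorem stmt6 (n : ℕ) (hn : 1 ≤ n) (p : ℝ) (hp : p ∈ Set.Icc (0 : ℝ) 1)
    (𝒞 : Finset (Matrix (Fin n) (Fin n) ℕ)) (hne : 𝒞.Nonempty)
    (hbin : ∀ C ∈ 𝒞, ∀ i j, C i j ≤ 1)
    (ha : ∀ P Q : Equiv.Perm (Fin n),
      𝒞.image (fun C => permMatN P * C * permMatN Q) = 𝒞)
    (hb : ∀ C ∈ 𝒞, ∀ D ∈ 𝒞, ∃ T₁ T₂ : Equiv.Perm (Fin n),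
      C = permMatN T₁ * D * permMatN T₂)
    (C D : Matrix (Fin n) (Fin n) ℕ) (hC : C ∈ 𝒞) (hD : D ∈ 𝒞) :
    (∑ b : Fin n → Fin n → Bool,
      if ∀ i j, C i j ≤ toMat b i j then
        (∏ i : Fin n, ∏ j : Fin n, (if b i j then p else 1 - p)) /
          ((𝒞.filter fun C' => ∀ i j, C' i j ≤ toMat b i j).card : ℝ)
      else 0) =
    (∑ b : Fin n → Fin n → Bool,
      if ∀ i j, D i j ≤ toMat b i j then
        (∏ i : Fin n, ∏ j : Fin n, (if b i j then p else 1 - p)) /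
          ((𝒞.filter fun C' => ∀ i j, C' i j ≤ toMat b i j).card : ℝ)
      else 0) := by
  obtain ⟨T₁, T₂, hCD⟩ := hb C hC D hD
  have hCe : ∀ i j, C i j = D (T₁ i) (T₂⁻¹ j) := by
    intro i j; rw [hCD]; exact permMat_mul_mul_apply T₁ T₂ D i j
  set e := shiftE (n := n) T₁ T₂ with he
  have heb : ∀ (b : Fin n → Fin n → Bool) i j, e b i j = b (T₁⁻¹ i) (T₂ j) := by
    intro b i j; rfl
  refine Fintype.sum_equiv e _ _ ?_
  intro b
  -- condition equivalence
  have hcond : (∀ i j, C i j ≤ toMat b i j) ↔ (∀ i j, D i j ≤ toMat (e b) i j) := by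
    constructor
    · intro h i j
      have := h (T₁⁻¹ i) (T₂ j)
      rw [hCe] at this
      simpa [toMat, heb] using this
    · intro h i j
      have := h (T₁ i) (T₂⁻¹ j)
      rw [hCe]
      simpa [toMat, heb] using this
  -- weight equality
  have hw : (∏ i : Fin n, ∏ j : Fin n, (if (e b) i j then p else 1 - p))
      = ∏ i : Fin n, ∏ j : Fin n, (if b i j then p else 1 - p) := by
    calc ∏ i : Fin n, ∏ j : Fin n, (if (e b) i j then p else 1 - p)
        = ∏ i : Fin n, ∏ j : Fin n, (if b (T₁⁻¹ i) (T₂ j) then p else 1 - p) := rfl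
      _ = ∏ i : Fin n, ∏ j : Fin n, (if b i (T₂ j) then p else 1 - p) :=
          Equiv.prod_comp T₁⁻¹ (fun i => ∏ j : Fin n, (if b i (T₂ j) then p else 1 - p))
      _ = ∏ i : Fin n, ∏ j : Fin n, (if b i j then p else 1 - p) :=
          Finset.prod_congr rfl fun i _ =>
            Equiv.prod_comp T₂ (fun j => if b i j then p else 1 - p)
  -- cardinality equality
  have hcard : (𝒞.filter fun C' => ∀ i j, C' i j ≤ toMat (e b) i j).card
      = (𝒞.filter fun C' => ∀ i j, C' i j ≤ toMat b i j).card := by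
    apply Finset.card_bij (fun C' _ => permMatN T₁ * C' * permMatN T₂)
    · intro A hA
      rw [Finset.mem_filter] at hA ⊢
      refine ⟨?_, ?_⟩
      · rw [← ha T₁ T₂]
        exact Finset.mem_image_of_mem _ hA.1
      · intro i j
        rw [permMat_mul_mul_apply]
        have := hA.2 (T₁ i) (T₂⁻¹ j)
        simpa [toMat, heb] using this
    · intro A hA B hB hAB
      funext i j
      have := congrFun (congrFun hAB (T₁⁻¹ i)) (T₂ j)
      simpa [permMat_mul_mul_apply] using this
    · intro A hA
      rw [Finset.mem_filter] at hA
      have : A ∈ 𝒞.image (fun C' => permMatN T₁ * C' * permMatN T₂) := by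
        rw [ha T₁ T₂]; exact hA.1
      obtain ⟨B, hB, hBA⟩ := Finset.mem_image.mp this
      refine ⟨B, Finset.mem_filter.mpr ⟨hB, ?_⟩, hBA⟩
      intro i j
      have h2 := hA.2 (T₁⁻¹ i) (T₂ j)
      have h3 : B i j = A (T₁⁻¹ i) (T₂ j) := by
        rw [← hBA, permMat_mul_mul_apply]; simp
      rw [h3]
      simpa [toMat, heb] using h2
  rw [hw, hcard] at *
  by_cases h : ∀ i j, C i j ≤ toMat b i j
  · rw [if_pos h, if_pos (hcond.mp h)]
  · rw [if_neg h, if_neg (fun h' => h (hcond.mpr h'))]
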